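/- Let U:(0,∞)→ℝ be an increasing, strictly concave, continuously differentiable function with U'(∞)=0 and AE(U) := limsup_{x→∞} xU'(x)/U(x) < 1. Then for any q with AE(U) < q < 1 there exists a constant L such that U(v) ≤ L(1+v^q) for all v > 0. -/

import Mathlib

open MeasureTheory Set Filter Real

/-- **Polynomial growth from reasonable asymptotic elasticity** (Lemma 6.3 of
Kramkov–Schachermayer).  If `U` is increasing, strictly concave, continuously
differentiable on `(0,∞)`, with `U'(∞) = 0` and `AE(U) = limsup_{y→∞} y U'(y)/U(y) < 1`,
then for every `q` with `AE(U) < q < 1` there is a constant `L` such that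
`U(v) ≤ L (1 + v^q)` for all `v > 0`. -/
theorem stmt4 (U : ℝ → ℝ)
    (hU_mono : StrictMonoOn U (Set.Ioi 0))
    (hU_conc : StrictConcaveOn ℝ (Set.Ioi 0) U)
    (hU_diff : ContDiffOn ℝ 1 U (Set.Ioi 0))
    (hInada : Filter.Tendsto (deriv U) Filter.atTop (nhds 0))
    (hAE : Filter.limsup (fun y => y * deriv U y / U y) Filter.atTop < 1) :
    ∀ q : ℝ, Filter.limsup (fun y => y * deriv U y / U y) Filter.atTop < q → q < 1 →
      ∃ L : ℝ, ∀ v : ℝ, 0 < v → U v ≤ L * (1 + v ^ q) := by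
  intro q hq hq1
  -- differentiability of U on Ioi 0
  have hdiff : ∀ y ∈ Set.Ioi (0:ℝ), DifferentiableAt ℝ U y := fun y hy =>
    ((hU_diff.differentiableOn one_ne_zero) y hy).differentiableAt (isOpen_Ioi.mem_nhds hy)
  -- the derivative is strictly antitone on Ioi 0
  have hanti : StrictAntiOn (deriv U) (Set.Ioi 0) := hU_conc.strictAntiOn_deriv hdiff
  -- the derivative is nonnegative on Ioi 0
  have hderiv_nonneg : ∀ y ∈ Set.Ioi (0:ℝ), 0 ≤ deriv U y := by
    intro y hy
    refine le_of_tendsto hInada ?_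
    filter_upwards [eventually_ge_atTop (y + 1)] with z hz
    have hyz : y < z := by linarith
    exact (hanti hy (lt_trans hy hyz) hyz).le
  by_cases hpos : ∃ x0 : ℝ, 0 < x0 ∧ 0 < U x0
  · obtain ⟨x0, hx0, hUx0⟩ := hpos
    have hUpos : ∀ y, x0 ≤ y → 0 < U y := by
      intro y hy
      rcases eq_or_lt_of_le hy with rfl | h
      · exact hUx0
      · exact lt_trans hUx0 (hU_mono hx0 (lt_trans hx0 h) h)
    -- the elasticity ratio is eventually bounded above
    have hbdd : Filter.IsBoundedUnder (· ≤ ·) Filter.atTop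
        (fun y => y * deriv U y / U y) := by
      apply Filter.isBoundedUnder_of_eventually_le
        (a := 1 + x0 * deriv U x0 / U x0)
      filter_upwards [eventually_ge_atTop (x0 + 1)] with y hy
      have hxy : x0 < y := by linarith
      have hy0 : (0:ℝ) < y := lt_trans hx0 hxy
      have hUy : 0 < U y := hUpos y hxy.le
      have hUy' : 0 ≤ deriv U y := hderiv_nonneg y hy0
      have hslope : deriv U y < slope U x0 y :=
        hU_conc.deriv_lt_slope hx0 hy0 hxy (hdiff y hy0)
      rw [slope_def_field] at hslope
      have hkey : deriv U y * (y - x0) < U y - U x0 := by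
        have h1 : 0 < y - x0 := by linarith
        calc deriv U y * (y - x0) < (U y - U x0) / (y - x0) * (y - x0) := by
              exact mul_lt_mul_of_pos_right hslope h1
          _ = U y - U x0 := by field_simp
      have h2 : y * deriv U y ≤ U y + x0 * deriv U y := by nlinarith
      have h3 : y * deriv U y / U y ≤ 1 + x0 * deriv U y / U y := by
        rw [div_le_iff₀ hUy]
        have : (1 + x0 * deriv U y / U y) * U y = U y + x0 * deriv U y := by
          field_simp
        rw [this]; exact h2
      refine h3.trans ?_
      have h4 : x0 * deriv U y / U y ≤ x0 * deriv U x0 / U x0 := by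
        apply div_le_div₀ (mul_nonneg hx0.le (hderiv_nonneg x0 hx0))
          (mul_le_mul_of_nonneg_left (hanti hx0 hy0 hxy).le hx0.le) hUx0
          (hU_mono hx0 hy0 hxy).le
      linarith
    -- extract the eventual differential inequality
    have hev : ∀ᶠ y in Filter.atTop, y * deriv U y / U y < q :=
      Filter.eventually_lt_of_limsup_lt hq hbdd
    obtain ⟨x1', hx1'⟩ := Filter.eventually_atTop.1 hev
    set x1 : ℝ := max x1' (x0 + 1) with hx1def
    have hx1x0 : x0 < x1 := lt_of_lt_of_le (by linarith) (le_max_right _ _)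
    have hx1pos : (0:ℝ) < x1 := lt_trans hx0 hx1x0
    have hUx1 : 0 < U x1 := hUpos x1 hx1x0.le
    have hkey : ∀ y, x1 ≤ y → y * deriv U y ≤ q * U y := by
      intro y hy
      have hUy : 0 < U y := hUpos y (hx1x0.le.trans hy)
      have := hx1' y (le_trans (le_max_left _ _) hy)
      rw [div_lt_iff₀ hUy] at this
      linarith
    -- the function g y = U y * y ^ (-q) is antitone on [x1, ∞)
    set g : ℝ → ℝ := fun y => U y * y ^ (-q) with hgdef
    have hgderiv : ∀ y ∈ Set.Ioi x1,
        HasDerivAt g (deriv U y * y ^ (-q) + U y * (-q * y ^ (-q - 1))) y := by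
      intro y hy
      have hy0 : (0:ℝ) < y := lt_trans hx1pos hy
      exact ((hdiff y hy0).hasDerivAt).mul
        (Real.hasDerivAt_rpow_const (Or.inl hy0.ne'))
    have hganti : AntitoneOn g (Set.Ici x1) := by
      apply antitoneOn_of_deriv_nonpos (convex_Ici x1)
      · apply ContinuousOn.mul
        · exact (hU_diff.continuousOn).mono fun y hy =>
            Set.mem_Ioi.2 (lt_of_lt_of_le hx1pos hy)
        · exact ContinuousOn.rpow_const continuousOn_id fun y hy =>
            Or.inl (ne_of_gt (lt_of_lt_of_le hx1pos hy))
      · rw [interior_Ici]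
        exact fun y hy => (hgderiv y hy).differentiableAt.differentiableWithinAt
      · rw [interior_Ici]
        intro y hy
        rw [(hgderiv y hy).deriv]
        have hy0 : (0:ℝ) < y := lt_trans hx1pos hy
        have h1 : y ^ (-q) = y ^ (-q - 1) * y := by
          rw [show -q = -q - 1 + 1 by ring, Real.rpow_add_one hy0.ne']; norm_num
        have h2 : (0:ℝ) < y ^ (-q - 1) := Real.rpow_pos_of_pos hy0 _
        have h3 : y * deriv U y ≤ q * U y := hkey y (le_of_lt hy)
        rw [h1]
        have : deriv U y * (y ^ (-q - 1) * y) + U y * (-q * y ^ (-q - 1))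
            = y ^ (-q - 1) * (y * deriv U y - q * U y) := by ring
        rw [this]
        exact mul_nonpos_of_nonneg_of_nonpos h2.le (by linarith)
    set C : ℝ := U x1 * x1 ^ (-q) with hCdef
    refine ⟨max (U x1) 0 + max C 0, ?_⟩
    intro v hv
    set L : ℝ := max (U x1) 0 + max C 0 with hLdef
    have hL0 : 0 ≤ L := by positivity
    have hLU : U x1 ≤ L := by
      have := le_max_left (U x1) 0
      have := le_max_left C 0
      have := le_max_right C 0
      simp only [hLdef]; linarith [le_max_left (U x1) 0, le_max_right C 0]
    have hLC : C ≤ L := by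
      simp only [hLdef]; linarith [le_max_left C 0, le_max_right (U x1) 0]
    have hvq : (0:ℝ) < v ^ q := Real.rpow_pos_of_pos hv q
    rcases le_or_gt v x1 with hvx1 | hvx1
    · -- small v : U v ≤ U x1 ≤ L ≤ L (1 + v^q)
      have hUv : U v ≤ U x1 := by
        rcases eq_or_lt_of_le hvx1 with rfl | h
        · exact le_rfl
        · exact (hU_mono hv hx1pos h).le
      nlinarith
    · -- large v : use antitonicity of g
      have hgv : g v ≤ g x1 := hganti (Set.self_mem_Ici) hvx1.le hvx1.le
      have hvnq : v ^ (-q) = (v ^ q)⁻¹ := Real.rpow_neg hv.le q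
      have hUvle : U v ≤ C * v ^ q := by
        have : U v * (v ^ q)⁻¹ ≤ C := by rw [← hvnq]; exact hgv
        calc U v = U v * (v ^ q)⁻¹ * v ^ q := by field_simp
          _ ≤ C * v ^ q := mul_le_mul_of_nonneg_right this hvq.le
      nlinarith
  · -- U is nonpositive everywhere on Ioi 0
    push_neg at hpos
    refine ⟨0, fun v hv => ?_⟩
    have := hpos v hv
    simpa using this
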